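/- arXiv:1501.00095 — 2 statements merged into one kernel-verified Lean document; each statement's English description precedes it below -/
import Mathlib

section
/- Let A be a finite-dimensional associative unital algebra over an algebraically closed field k. If dim_k Hom_A(P, P') ≤ 1 for every pair P, P' of indecomposable projective left A-modules, then A has only finitely many two-sided ideals (indeed at most 2^{dim_k A}). -/
set_option maxHeartbeats 1000000
set_option synthInstance.maxHeartbeats 400000

/-- A module is indecomposable: it is nonzero and admits no internal direct sum
decomposition into two nonzero submodules. -/
def IsIndecomposableModule (A P : Type) [Ring A] [AddCommGroup P] [Module A P] : Prop :=
  Nontrivial P ∧ ∀ N1 N2 : Submodule A P, N1 ⊔ N2 = ⊤ → N1 ⊓ N2 = ⊥ → N1 = ⊥ ∨ N2 = ⊥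

open Module Submodule

section Aux
variable {k A : Type} [Field k] [Ring A] [Algebra k A]

/-- A primitive idempotent. -/
def IsPrimIdem (A : Type) [Ring A] (e : A) : Prop :=
  e * e = e ∧ e ≠ 0 ∧ ∀ f g : A, f * f = f → g * g = g → f * g = 0 → g * f = 0 →
    f + g = e → f = 0 ∨ g = 0

instance subSMulComm (p : Submodule A A) : SMulCommClass A k ↥p :=
  ⟨fun a c x => Subtype.ext (smul_comm a c (x : A))⟩

lemma mem_spanE {e x : A} (he : e * e = e) (hx : x ∈ span A {e}) : x * e = x := by
  obtain ⟨a, rfl⟩ := Submodule.mem_span_singleton.mp hx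
  rw [smul_eq_mul, mul_assoc, he]

lemma self_mem_spanE (e : A) : e ∈ span A {e} := Submodule.mem_span_singleton_self e

lemma mul_mem_spanE {e : A} (x : A) (hx : x * e = x) : x ∈ span A {e} :=
  Submodule.mem_span_singleton.mpr ⟨x, by rw [smul_eq_mul, hx]⟩

/-- `A e` is a projective `A`-module. -/
lemma projective_spanE {e : A} (he : e * e = e) : Module.Projective A ↥(span A {e}) := by
  refine Module.Projective.of_split (span A {e}).subtype
    { toFun := fun a => ⟨a * e, mul_mem_spanE _ (by rw [mul_assoc, he])⟩
      map_add' := fun a b => by ext; simp [add_mul]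
      map_smul' := fun a b => by ext; simp [smul_eq_mul, mul_assoc] } ?_
  refine LinearMap.ext fun x => Subtype.ext ?_
  simpa using mem_spanE he x.2

/-- `A e` is indecomposable for a primitive idempotent `e`. -/
lemma indec_spanE {e : A} (he : IsPrimIdem A e) :
    IsIndecomposableModule A ↥(span A {e}) := by
  obtain ⟨he2, he0, hp⟩ := he
  constructor
  · exact nontrivial_of_ne ⟨e, self_mem_spanE e⟩ 0 (by simpa [Subtype.ext_iff] using he0)
  intro N1 N2 hsup hinf
  set M1 := N1.map (span A {e}).subtype with hM1
  set M2 := N2.map (span A {e}).subtype with hM2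
  have hinj : Function.Injective (span A {e}).subtype := Subtype.coe_injective
  have hM1le : M1 ≤ span A {e} := by rintro x ⟨y, -, rfl⟩; exact y.2
  have hM2le : M2 ≤ span A {e} := by rintro x ⟨y, -, rfl⟩; exact y.2
  have hMsup : M1 ⊔ M2 = span A {e} := by
    rw [hM1, hM2, ← Submodule.map_sup, hsup, Submodule.map_top, Submodule.range_subtype]
  have hMinf : M1 ⊓ M2 = ⊥ := by
    rw [hM1, hM2, ← Submodule.map_inf _ hinj, hinf, Submodule.map_bot]
  have heM : e ∈ M1 ⊔ M2 := by rw [hMsup]; exact self_mem_spanE e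
  obtain ⟨f, hf, g, hg, hfg⟩ := Submodule.mem_sup.mp heM
  -- f * g = 0, f * f = f
  have hfe : f * e = f := mem_spanE he2 (hM1le hf)
  have hge : g * e = g := mem_spanE he2 (hM2le hg)
  have hffM1 : f * f ∈ M1 := M1.smul_mem f hf
  have hfgM2 : f * g ∈ M2 := M2.smul_mem f hg
  have hgfM1 : g * f ∈ M1 := M1.smul_mem g hf
  have hggM2 : g * g ∈ M2 := M2.smul_mem g hg
  have h1 : f - f * f = f * g := by
    rw [sub_eq_iff_eq_add']
    calc f = f * e := hfe.symm
    _ = f * f + f * g := by rw [← hfg, mul_add]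
  have h2 : g - g * g = g * f := by
    rw [sub_eq_iff_eq_add]
    calc g = g * e := hge.symm
    _ = g * f + g * g := by rw [← hfg, mul_add]
  have hfg0 : f * g = 0 := by
    have : f * g ∈ M1 ⊓ M2 := ⟨by rw [← h1]; exact M1.sub_mem hf hffM1, hfgM2⟩
    rwa [hMinf, Submodule.mem_bot] at this
  have hgf0 : g * f = 0 := by
    have : g * f ∈ M1 ⊓ M2 := ⟨hgfM1, by rw [← h2]; exact M2.sub_mem hg hggM2⟩
    rwa [hMinf, Submodule.mem_bot] at this
  have hff : f * f = f := by
    have := h1; rw [hfg0, sub_eq_zero] at this; exact this.symm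
  have hgg : g * g = g := by
    have := h2; rw [hgf0, sub_eq_zero] at this; exact this.symm
  rcases hp f g hff hgg hfg0 hgf0 hfg with h0 | h0
  · left
    have : M1 = ⊥ := by
      have hle : M1 ≤ M2 := le_trans hM1le (by
        rw [← hfg, h0, zero_add]
        exact Submodule.span_le.mpr (by simpa using hg))
      rw [← hMinf, inf_eq_left.mpr hle]
    rw [hM1] at this
    exact (Submodule.map_injective_of_injective hinj) (by rw [this, Submodule.map_bot])
  · right
    have : M2 = ⊥ := by
      have hle : M2 ≤ M1 := le_trans hM2le (by
        rw [← hfg, h0, add_zero]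
        exact Submodule.span_le.mpr (by simpa using hf))
      rw [← hMinf, inf_eq_right.mpr hle]
    rw [hM2] at this
    exact (Submodule.map_injective_of_injective hinj) (by rw [this, Submodule.map_bot])

end Aux

section Key
variable {k A : Type} [Field k] [Ring A] [Algebra k A]

/-- Right multiplication by an element of the corner `... f` as an `A`-linear map
`Ae → Af`. -/
def rmul (e f : A) (z : A) (hz : z * f = z) :
    ↥(span A {e}) →ₗ[A] ↥(span A {f}) where
  toFun w := ⟨(w : A) * z, mul_mem_spanE _ (by rw [mul_assoc, hz])⟩
  map_add' a b := by ext; simp [add_mul]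
  map_smul' a b := by ext; simp [smul_eq_mul, mul_assoc]

lemma key_dep {e f : A} (he : e * e = e)
    (hrank : Module.rank k (↥(span A {e}) →ₗ[A] ↥(span A {f})) ≤ 1)
    (x y : A) (hx1 : e * x = x) (hx2 : x * f = x) (hy1 : e * y = y) (hy2 : y * f = y)
    (hx0 : x ≠ 0) : ∃ c : k, y = c • x := by
  have hnli : ¬ LinearIndependent k ![rmul e f x hx2, rmul e f y hy2] := by
    intro hli
    have := hli.cardinal_le_rank
    rw [Cardinal.mk_fintype] at this
    simp only [Fintype.card_fin, Nat.cast_ofNat] at this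
    exact absurd (this.trans hrank) (by norm_num)
  obtain ⟨g, hg, i, hi⟩ := Fintype.not_linearIndependent_iff.mp hnli
  have hg' : g 0 • x + g 1 • y = 0 := by
    have := congrArg (fun T => ((T ⟨e, self_mem_spanE e⟩ : ↥(span A {f})) : A)) hg
    simpa [Fin.sum_univ_two, rmul, hx1, hy1] using this
  by_cases hg1 : g 1 = 0
  · exfalso
    have hg0 : g 0 ≠ 0 := by
      fin_cases i
      · simpa using hi
      · simp_all
    rw [hg1, zero_smul, add_zero, smul_eq_zero] at hg'
    tauto
  · refine ⟨-(g 1)⁻¹ * g 0, ?_⟩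
    have h1 : g 1 • y = -(g 0 • x) := eq_neg_of_add_eq_zero_right hg'
    calc y = (g 1)⁻¹ • (g 1 • y) := by rw [smul_smul, inv_mul_cancel₀ hg1, one_smul]
      _ = (g 1)⁻¹ • -(g 0 • x) := by rw [h1]
      _ = (-(g 1)⁻¹ * g 0) • x := by rw [smul_neg, smul_smul, neg_mul, neg_smul]
end Key

section Decomp
variable {k A : Type} [Field k] [Ring A] [Algebra k A] [FiniteDimensional k A]

/-- Every idempotent decomposes as a sum of pairwise-orthogonal primitive idempotents
living in its corner. -/
lemma exists_prim_decomp : ∀ (n : ℕ) (e : A), e * e = e →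
    finrank k ((span A {e}).restrictScalars k) = n →
    ∃ L : List A, (∀ x ∈ L, IsPrimIdem A x) ∧
      L.Pairwise (fun a b => a * b = 0 ∧ b * a = 0) ∧
      (∀ x ∈ L, e * x = x ∧ x * e = x) ∧ L.sum = e := by
  intro n
  induction n using Nat.strong_induction_on with
  | _ n IH =>
    intro e he hrank
    by_cases he0 : e = 0
    · exact ⟨[], by simp, by simp, by simp, by simp [he0]⟩
    by_cases hprim : IsPrimIdem A e
    · exact ⟨[e], by simpa using hprim, by simp,
        by intro x hx; rw [List.mem_singleton] at hx; subst hx; exact ⟨he, he⟩, by simp⟩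
    have hsplit : ∃ f g : A, f * f = f ∧ g * g = g ∧ f * g = 0 ∧ g * f = 0 ∧ f + g = e ∧
        f ≠ 0 ∧ g ≠ 0 := by
      unfold IsPrimIdem at hprim
      push_neg at hprim
      obtain ⟨f, g, h1, h2, h3, h4, h5, h6, h7⟩ := hprim he he0
      exact ⟨f, g, h1, h2, h3, h4, h5, h6, h7⟩
    obtain ⟨f, g, hff, hgg, hfg, hgf, hsum, hf0, hg0⟩ := hsplit
    have hef : e * f = f := by rw [← hsum, add_mul, hff, hgf, add_zero]
    have hfe : f * e = f := by rw [← hsum, mul_add, hff, hfg, add_zero]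
    have heg : e * g = g := by rw [← hsum, add_mul, hgg, hfg, zero_add]
    have hge : g * e = g := by rw [← hsum, mul_add, hgg, hgf, zero_add]
    have hkey : ∀ u v : A, u * u = u → u * e = u → v * e = v → v * u = 0 →
        v ≠ 0 → finrank k ((span A {u}).restrictScalars k) < n := by
      intro u v huu hue hve hvu hv0
      rw [← hrank]
      apply Submodule.finrank_lt_finrank_of_lt
      rw [lt_iff_le_and_ne]
      refine ⟨fun x hx => ?_, fun hEq => ?_⟩
      · simp only [Submodule.restrictScalars_mem] at hx ⊢
        have hxu := mem_spanE huu hx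
        exact mul_mem_spanE x (by rw [← hxu, mul_assoc, hue])
      · have hvmem : v ∈ span A {u} := by
          have : v ∈ (span A {u}).restrictScalars k := by
            rw [hEq]; exact mul_mem_spanE v hve
          exact this
        have := mem_spanE huu hvmem
        rw [hvu] at this
        exact hv0 this.symm
    obtain ⟨L1, hL1p, hL1o, hL1c, hL1s⟩ :=
      IH _ (hkey f g hff hfe hge hgf hg0) f hff rfl
    obtain ⟨L2, hL2p, hL2o, hL2c, hL2s⟩ :=
      IH _ (hkey g f hgg hge hfe hfg hf0) g hgg rfl
    refine ⟨L1 ++ L2, ?_, ?_, ?_, by rw [List.sum_append, hL1s, hL2s, hsum]⟩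
    · intro x hx
      rcases List.mem_append.mp hx with h | h
      exacts [hL1p x h, hL2p x h]
    · rw [List.pairwise_append]
      refine ⟨hL1o, hL2o, fun x hx y hy => ?_⟩
      have hxf := hL1c x hx
      have hyg := hL2c y hy
      constructor
      · calc x * y = (x * f) * (g * y) := by rw [hxf.2, hyg.1]
          _ = x * (f * g) * y := by rw [mul_assoc, mul_assoc, mul_assoc]
          _ = 0 := by rw [hfg, mul_zero, zero_mul]
      · calc y * x = (y * g) * (f * x) := by rw [hyg.2, hxf.1]
          _ = y * (g * f) * x := by rw [mul_assoc, mul_assoc, mul_assoc]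
          _ = 0 := by rw [hgf, mul_zero, zero_mul]
    · intro x hx
      rcases List.mem_append.mp hx with h | h
      · have hc := hL1c x h
        constructor
        · rw [← hc.1, ← mul_assoc, hef]
        · rw [← hc.2, mul_assoc, hfe]
      · have hc := hL2c x h
        constructor
        · rw [← hc.1, ← mul_assoc, heg]
        · rw [← hc.2, mul_assoc, hge]
end Decomp

private lemma sandwich {A : Type} [Ring A] (w x a y z : A) :
    w * (x * a * y) * z = (w * x) * a * (y * z) := by simp only [mul_assoc]


/-- STATEMENT 17: if `A` is a finite-dimensional associative unital algebra over an
algebraically closed field `k` such that `dim_k Hom_A(P, P') ≤ 1` for every pair of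
indecomposable projective left `A`-modules `P`, `P'`, then `A` has only finitely many
two-sided ideals, indeed at most `2 ^ dim_k A` of them. -/
theorem statement17 (k A : Type) [Field k] [IsAlgClosed k] [Ring A] [Algebra k A]
    [FiniteDimensional k A]
    (h : ∀ (P P' : Type) [AddCommGroup P] [Module k P] [Module A P]
      [IsScalarTower k A P] [SMulCommClass A k P]
      [AddCommGroup P'] [Module k P'] [Module A P']
      [IsScalarTower k A P'] [SMulCommClass A k P'],
      Module.Projective A P → IsIndecomposableModule A P →
      Module.Projective A P' → IsIndecomposableModule A P' →
      Module.rank k (P →ₗ[A] P') ≤ 1) :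
    Finite (TwoSidedIdeal A) ∧ Nat.card (TwoSidedIdeal A) ≤ 2 ^ Module.finrank k A := by
  classical
  by_cases hS : Subsingleton A
  · haveI : Subsingleton (TwoSidedIdeal A) := ⟨fun I J => SetLike.ext fun x => by
      obtain rfl : x = 0 := Subsingleton.elim x 0
      exact iff_of_true I.zero_mem J.zero_mem⟩
    haveI : Unique (TwoSidedIdeal A) := uniqueOfSubsingleton ⊥
    refine ⟨Finite.of_subsingleton, ?_⟩
    rw [Nat.card_unique]
    exact Nat.one_le_two_pow
  haveI : Nontrivial A := not_subsingleton_iff_nontrivial.mp hS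
  obtain ⟨L, hLp, hLo, -, hLs⟩ :=
    exists_prim_decomp (k := k) (A := A) _ (1 : A) (by rw [mul_one]) rfl
  set m := L.length with hm
  set E : Fin m → A := fun i => L.get i with hE
  have hEp : ∀ i, IsPrimIdem A (E i) := fun i => hLp _ (L.get_mem i)
  have hEi : ∀ i, E i * E i = E i := fun i => (hEp i).1
  have hEo : ∀ i j : Fin m, i ≠ j → E i * E j = 0 := by
    intro i j hij
    rcases lt_or_gt_of_ne hij with hlt | hlt
    · exact (List.pairwise_iff_get.mp hLo i j hlt).1
    · exact (List.pairwise_iff_get.mp hLo j i hlt).2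
  have hEs : ∑ i, E i = 1 := by
    rw [← hLs, ← List.sum_ofFn]
    congr 1
    exact List.ofFn_get L
  -- Peirce decomposition
  have peirce : ∀ x : A, ∑ i, ∑ j, E i * x * E j = x := by
    intro x
    have hrow : ∀ i, ∑ j, E i * x * E j = E i * x := by
      intro i
      rw [← Finset.mul_sum, hEs, mul_one]
    rw [Finset.sum_congr rfl fun i _ => hrow i, ← Finset.sum_mul, hEs, one_mul]
  -- key linear dependence in each Peirce component
  have hkeyc : ∀ (i j : Fin m) (x y : A), E i * x * E j ≠ 0 →
      ∃ c : k, E i * y * E j = c • (E i * x * E j) := by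
    intro i j x y hx0
    have hrank := h ↥(Submodule.span A {E i}) ↥(Submodule.span A {E j})
      (projective_spanE (hEi i)) (indec_spanE (hEp i))
      (projective_spanE (hEi j)) (indec_spanE (hEp j))
    refine key_dep (hEi i) hrank (E i * x * E j) (E i * y * E j) ?_ ?_ ?_ ?_ hx0
    · rw [← mul_assoc, ← mul_assoc, hEi]
    · rw [mul_assoc, hEi]
    · rw [← mul_assoc, ← mul_assoc, hEi]
    · rw [mul_assoc, hEi]
  set T : Set (Fin m × Fin m) := {p | ∃ a : A, E p.1 * a * E p.2 ≠ 0} with hT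
  haveI : Fintype ↥T := Fintype.ofFinite _
  set b : Fin m × Fin m → A := fun p =>
    if hp : p ∈ T then E p.1 * hp.choose * E p.2 else 0 with hb
  have hbP : ∀ p ∈ T, ∃ a : A, E p.1 * a * E p.2 ≠ 0 ∧ b p = E p.1 * a * E p.2 :=
    fun p hp => ⟨hp.choose, hp.choose_spec, by rw [hb]; exact dif_pos hp⟩
  have hb0 : ∀ p ∈ T, b p ≠ 0 := by
    intro p hp
    obtain ⟨a, ha, hba⟩ := hbP p hp
    rw [hba]; exact ha
  have hbq : ∀ p ∈ T, E p.1 * b p * E p.2 = b p := by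
    intro p hp
    obtain ⟨a, -, hba⟩ := hbP p hp
    rw [hba, sandwich, hEi, hEi]
  have hbz : ∀ p q : Fin m × Fin m, p ≠ q → E q.1 * b p * E q.2 = 0 := by
    intro p q hpq
    by_cases hp : p ∈ T
    · obtain ⟨a, -, hba⟩ := hbP p hp
      rw [hba, sandwich]
      have hne : q.1 ≠ p.1 ∨ p.2 ≠ q.2 := by
        by_contra hc
        push_neg at hc
        exact hpq (Prod.ext hc.1.symm hc.2)
      rcases hne with hne | hne
      · rw [hEo _ _ hne, zero_mul, zero_mul]
      · rw [hEo _ _ hne, mul_zero]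
    · rw [hb]
      simp only [dif_neg hp, mul_zero, zero_mul]
  -- linear independence of the chosen elements
  have hli : LinearIndependent k (fun p : ↥T => b ↑p) := by
    rw [Fintype.linearIndependent_iff]
    intro g hg q
    have h2 : E (↑q : Fin m × Fin m).1 * (∑ p : ↥T, g p • b ↑p) * E (↑q : Fin m × Fin m).2
        = g q • b ↑q := by
      rw [Finset.mul_sum, Finset.sum_mul,
        Finset.sum_congr rfl fun p _ => by rw [mul_smul_comm, smul_mul_assoc]]
      rw [Finset.sum_eq_single_of_mem q (Finset.mem_univ q)
        (fun p _ hpq => by rw [hbz ↑p ↑q (Subtype.coe_injective.ne hpq), smul_zero])]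
      rw [hbq _ q.2]
    rw [hg, mul_zero, zero_mul] at h2
    rcases smul_eq_zero.mp h2.symm with h0 | h0
    · exact h0
    · exact absurd h0 (hb0 _ q.2)
  have hcard : Fintype.card ↥T ≤ Module.finrank k A := hli.fintype_card_le_finrank
  -- the injection from two-sided ideals
  set Ψ : TwoSidedIdeal A → Set ↥T := fun I => {p | b ↑p ∈ I} with hΨ
  have hmono : ∀ I J : TwoSidedIdeal A, Ψ I = Ψ J → ∀ x ∈ I, x ∈ J := by
    intro I J hIJ x hx
    have hterm : ∀ i j, E i * x * E j ∈ J := by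
      intro i j
      by_cases h0 : E i * x * E j = 0
      · rw [h0]; exact J.zero_mem
      · have hpT : (i, j) ∈ T := ⟨x, h0⟩
        obtain ⟨a, ha0, hba⟩ := hbP (i, j) hpT
        have hbpI : b (i, j) ∈ I := by
          obtain ⟨c, hc⟩ := hkeyc i j x a h0
          rw [hba, hc, Algebra.smul_def]
          exact I.mul_mem_left _ _ (I.mul_mem_right _ _ (I.mul_mem_left _ _ hx))
        have hbpJ : b (i, j) ∈ J := by
          have hmem : (⟨(i, j), hpT⟩ : ↥T) ∈ Ψ I := hbpI
          rw [hIJ] at hmem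
          exact hmem
        obtain ⟨c, hc⟩ := hkeyc i j a x ha0
        rw [← hba] at hc
        rw [hc, Algebra.smul_def]
        exact J.mul_mem_left _ _ hbpJ
    rw [← peirce x]
    exact sum_mem fun i _ => sum_mem fun j _ => hterm i j
  have hinj : Function.Injective Ψ := fun I J hIJ =>
    SetLike.ext fun x => ⟨fun hx => hmono I J hIJ x hx, fun hx => hmono J I hIJ.symm x hx⟩
  refine ⟨Finite.of_injective Ψ hinj, ?_⟩
  calc Nat.card (TwoSidedIdeal A) ≤ Nat.card (Set ↥T) :=
        Nat.card_le_card_of_injective Ψ hinj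
    _ = 2 ^ Fintype.card ↥T := by rw [Nat.card_eq_fintype_card, Fintype.card_set]
    _ ≤ 2 ^ Module.finrank k A := Nat.pow_le_pow_right (by norm_num) hcard
end

section
/- Let k be an algebraically closed field. If A is the path algebra over k of a finite quiver whose underlying graph is a tree, or the incidence algebra over k of a finite partially ordered set, then A has only finitely many two-sided ideals. -/
set_option maxHeartbeats 1000000
set_option synthInstance.maxHeartbeats 400000

namespace DPF

open Matrix

/-- A finite quiver on `Fin n` (given by an arrow relation, no loops, no two-cycles)
whose underlying (undirected simple) graph is a tree. -/
structure TreeQuiver (n : ℕ) : Type where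
  arr : Fin n → Fin n → Prop
  loopless : ∀ i, ¬ arr i i
  oneway : ∀ i j, arr i j → ¬ arr j i
  isTree : (SimpleGraph.fromRel arr).IsTree

namespace TreeQuiver

variable {n : ℕ}

/-- The underlying simple graph of the quiver. -/
def G (Q : TreeQuiver n) : SimpleGraph (Fin n) := SimpleGraph.fromRel Q.arr

/-- `Q.Reach i j` : `j` is a successor of `i`, i.e. there is an oriented
(possibly trivial) path from `i` to `j`. -/
def Reach (Q : TreeQuiver n) (i j : Fin n) : Prop := Relation.ReflTransGen Q.arr i j

/-- `i` is a sink (no outgoing arrows). -/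
def IsSink (Q : TreeQuiver n) (i : Fin n) : Prop := ∀ j, ¬ Q.arr i j

/-- `i` is a source (no incoming arrows). -/
def IsSource (Q : TreeQuiver n) (i : Fin n) : Prop := ∀ j, ¬ Q.arr j i

/-- The degree of a vertex in the underlying graph. -/
noncomputable def deg (Q : TreeQuiver n) (i : Fin n) : ℕ := {j | Q.G.Adj i j}.ncard

/-- `i ∈ K(Q)`: `i` is a sink or a source. -/
def inK (Q : TreeQuiver n) (i : Fin n) : Prop := Q.IsSink i ∨ Q.IsSource i

/-- `i ∈ K'(Q)`: a sink or a source of degree at least 2. -/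
def inK' (Q : TreeQuiver n) (i : Fin n) : Prop := Q.inK i ∧ 2 ≤ Q.deg i

/-- `Q` is admissible: all vertices of degree at least 3 are sinks or sources. -/
def Admissible (Q : TreeQuiver n) : Prop := ∀ i, 3 ≤ Q.deg i → Q.inK i

/-- A maximal chain of `Q` is (the oriented path between) a pair `(s, t)` where `s` is a
source, `t` is a sink, and `t` is reachable from `s`. -/
def IsMaxChain (Q : TreeQuiver n) (s t : Fin n) : Prop :=
  Q.IsSource s ∧ Q.IsSink t ∧ Q.Reach s t

/-- The vertex set of a chain from `s` to `t`. -/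
def chainSet (Q : TreeQuiver n) (s t : Fin n) : Set (Fin n) := {v | Q.Reach s v ∧ Q.Reach v t}

/-- The vertex set of the union of a collection `S` of (maximal) chains, i.e. of the
corresponding "support" subgraph. -/
def suppVerts (Q : TreeQuiver n) (S : Set (Fin n × Fin n)) : Set (Fin n) :=
  {v | ∃ c ∈ S, v ∈ Q.chainSet c.1 c.2}

/-- The adjacency relation of the subgraph given by the union of the chains in `S`. -/
def suppAdj (Q : TreeQuiver n) (S : Set (Fin n × Fin n)) (i j : Fin n) : Prop :=
  Q.G.Adj i j ∧ ∃ c ∈ S, i ∈ Q.chainSet c.1 c.2 ∧ j ∈ Q.chainSet c.1 c.2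

/-- The degree of a vertex in the subgraph given by the union of the chains in `S`. -/
noncomputable def suppDeg (Q : TreeQuiver n) (S : Set (Fin n × Fin n)) (i : Fin n) : ℕ :=
  {j | Q.suppAdj S i j}.ncard

/-- The subgraph given by the union of the chains in `S` is connected. -/
def SuppConnected (Q : TreeQuiver n) (S : Set (Fin n × Fin n)) : Prop :=
  ∀ u ∈ Q.suppVerts S, ∀ v ∈ Q.suppVerts S, Relation.ReflTransGen (Q.suppAdj S) u v

/-- The two unions of (maximal) chains `S`, `T` are equal as subgraphs of `Q`. -/
def SuppEq (Q : TreeQuiver n) (S T : Set (Fin n × Fin n)) : Prop :=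
  Q.suppVerts S = Q.suppVerts T ∧ ∀ i j, Q.suppAdj S i j ↔ Q.suppAdj T i j

/-- A path function: `α i` is a successor of `i` or `0` (here: `none`). -/
def IsPathFun (Q : TreeQuiver n) (α : Fin n → Option (Fin n)) : Prop :=
  ∀ i j, α i = some j → Q.Reach i j

/-- Monotonicity of a path function. -/
def MonotoneFun (Q : TreeQuiver n) (α : Fin n → Option (Fin n)) : Prop :=
  ∀ i j x, Q.Reach j i → α i = some x → ∃ y, α j = some y ∧ Q.Reach y x

/-- The support of a function `α : Q₀ → Q₀ ∪ {0}`: the set of maximal chains containing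
some value of `α`. -/
def suppF (Q : TreeQuiver n) (α : Fin n → Option (Fin n)) : Set (Fin n × Fin n) :=
  {c | Q.IsMaxChain c.1 c.2 ∧ ∃ i x, α i = some x ∧ x ∈ Q.chainSet c.1 c.2}

/-- A special function: a monotone path function with connected support such that any
sink-or-source vertex of the support sent to `0` has degree `1` in the support. -/
def SpecialFun (Q : TreeQuiver n) (α : Fin n → Option (Fin n)) : Prop :=
  Q.IsPathFun α ∧ Q.MonotoneFun α ∧ Q.SuppConnected (Q.suppF α) ∧
    ∀ i, Q.inK i → i ∈ Q.suppVerts (Q.suppF α) → α i = none → Q.suppDeg (Q.suppF α) i = 1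

/-- `Q.Gamma s t`: the vertex set of the connected component of `t` in the graph obtained
from `Q` by deleting the vertex `s`. -/
def Gamma (Q : TreeQuiver n) (s t : Fin n) : Set (Fin n) :=
  {v | Relation.ReflTransGen (fun a b => Q.G.Adj a b ∧ a ≠ s ∧ b ≠ s) t v}

end TreeQuiver

open TreeQuiver

section Algebra

variable {n : ℕ} (Q : TreeQuiver n) (k : Type) [Field k]

/-- The path algebra of the tree quiver `Q` over `k`, realized concretely as the
subalgebra of `Matrix (Fin n) (Fin n) k` of matrices supported on the reachability
relation; the matrix unit in position `(j, i)` corresponds to the unique path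
`a_{ji}` from `i` to `j`. -/
def pathAlg : Subalgebra k (Matrix (Fin n) (Fin n) k) where
  carrier := {x | ∀ i j, ¬ Q.Reach j i → x i j = 0}
  mul_mem' := by
    intro x y hx hy i j hij
    rw [Matrix.mul_apply]
    refine Finset.sum_eq_zero fun m _ => ?_
    by_cases h1 : Q.Reach m i
    · have h2 : ¬ Q.Reach j m := fun h2 => hij (Relation.ReflTransGen.trans h2 h1)
      rw [hy m j h2, mul_zero]
    · rw [hx i m h1, zero_mul]
  one_mem' := by
    intro i j hij
    have hne : i ≠ j := by rintro rfl; exact hij Relation.ReflTransGen.refl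
    exact Matrix.one_apply_ne hne
  add_mem' := by
    intro x y hx hy i j hij
    simp only [Matrix.add_apply, hx i j hij, hy i j hij, add_zero]
  zero_mem' := by intro i j hij; rfl
  algebraMap_mem' := by
    intro r i j hij
    have hne : i ≠ j := by rintro rfl; exact hij Relation.ReflTransGen.refl
    simp [Matrix.algebraMap_matrix_apply, hne]

theorem std_mem (t s : Fin n) (h : Q.Reach s t) :
    Matrix.single t s (1 : k) ∈ pathAlg Q k := by
  intro i j hij
  by_cases h1 : t = i ∧ s = j
  · obtain ⟨rfl, rfl⟩ := h1
    exact absurd h hij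
  · simp only [Matrix.single, Matrix.of_apply, if_neg h1]

/-- The path `a_{ts}` from `s` to `t`, as an element of the path algebra
(by convention `0` if `t` is not a successor of `s`). -/
noncomputable def aEl (t s : Fin n) : pathAlg Q k :=
  haveI := Classical.dec (Q.Reach s t)
  if h : Q.Reach s t then ⟨Matrix.single t s 1, std_mem Q k t s h⟩ else 0

/-- The trivial path `e_i` at the vertex `i`. -/
noncomputable def e (i : Fin n) : pathAlg Q k :=
  ⟨Matrix.single i i 1, std_mem Q k i i Relation.ReflTransGen.refl⟩

/-- `B` is a two-sided ideal of the path algebra, i.e. a sub-bimodule of the regular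
`A`-`A`-bimodule `A`. -/
def IsIdeal (B : Submodule k ↥(pathAlg Q k)) : Prop :=
  (∀ a : ↥(pathAlg Q k), ∀ x ∈ B, a * x ∈ B) ∧ (∀ a : ↥(pathAlg Q k), ∀ x ∈ B, x * a ∈ B)

/-- `B` is an indecomposable sub-bimodule of `A`: a nonzero two-sided ideal which does not
decompose as an (internal) direct sum of two nonzero sub-bimodules. -/
def Indec (B : Submodule k ↥(pathAlg Q k)) : Prop :=
  IsIdeal Q k B ∧ B ≠ ⊥ ∧
    ∀ B1 B2 : Submodule k ↥(pathAlg Q k), IsIdeal Q k B1 → IsIdeal Q k B2 →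
      B1 ⊔ B2 = B → B1 ⊓ B2 = ⊥ → B1 = ⊥ ∨ B2 = ⊥

/-- The support of a two-sided ideal `B`: the set of maximal chains `(s, t)` of `Q`
such that `a_{ts} ∈ B`. -/
def suppB (B : Submodule k ↥(pathAlg Q k)) : Set (Fin n × Fin n) :=
  {c | Q.IsMaxChain c.1 c.2 ∧ aEl Q k c.2 c.1 ∈ B}

/-- The indecomposable projective left module `P_j = A e_j`, as a left ideal of `A`. -/
def Pmod (j : Fin n) : Submodule ↥(pathAlg Q k) ↥(pathAlg Q k) where
  carrier := {x | x * e Q k j = x}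
  add_mem' := by
    intro a b ha hb
    show (a + b) * e Q k j = a + b
    rw [add_mul]
    rw [show a * e Q k j = a from ha, show b * e Q k j = b from hb]
  zero_mem' := by
    show (0 : ↥(pathAlg Q k)) * e Q k j = 0
    rw [zero_mul]
  smul_mem' := by
    intro c x hx
    show (c • x) * e Q k j = c • x
    rw [smul_eq_mul, mul_assoc, show x * e Q k j = x from hx]

/-- `B e_i`, as a left ideal (left `A`-submodule) of `A`; here `B` is a two-sided ideal. -/
def BeiL (B : Submodule k ↥(pathAlg Q k)) (hB : IsIdeal Q k B) (i : Fin n) :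
    Submodule ↥(pathAlg Q k) ↥(pathAlg Q k) where
  carrier := {x | x ∈ B ∧ x * e Q k i = x}
  add_mem' := by
    intro a b ha hb
    exact ⟨B.add_mem ha.1 hb.1, by rw [add_mul, ha.2, hb.2]⟩
  zero_mem' := ⟨B.zero_mem, by rw [zero_mul]⟩
  smul_mem' := by
    intro c x hx
    refine ⟨?_, ?_⟩
    · show c * x ∈ B
      exact hB.1 c x hx.1
    · show (c • x) * e Q k i = c • x
      rw [smul_eq_mul, mul_assoc, hx.2]

/-- A left `A`-submodule `N` of `A` is (zero or) indecomposable. -/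
def IndecL (N : Submodule ↥(pathAlg Q k) ↥(pathAlg Q k)) : Prop :=
  N ≠ ⊥ ∧ ∀ N1 N2 : Submodule ↥(pathAlg Q k) ↥(pathAlg Q k),
    N1 ⊔ N2 = N → N1 ⊓ N2 = ⊥ → N1 = ⊥ ∨ N2 = ⊥

/-- `x` is "the" function `x_B` associated to the indecomposable sub-bimodule `B`:
`x i = none` iff `B e_i = 0`, and `x i = some j` implies `B e_i ≅ P_j` as left `A`-modules. -/
def IsXB (B : Submodule k ↥(pathAlg Q k)) (hB : IsIdeal Q k B) (x : Fin n → Option (Fin n)) :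
    Prop :=
  ∀ i, (x i = none ↔ BeiL Q k B hB i = ⊥) ∧
    ∀ j, x i = some j →
      Nonempty (↥(BeiL Q k B hB i) ≃ₗ[↥(pathAlg Q k)] ↥(Pmod Q k j))

/-- The subspace `B_x` of `A` associated to a (special) function `x` : the `k`-linear span
of all paths `a_{ts}` with `x s ≠ 0` and `t` a successor of `x s`. -/
def Bspan (x : Fin n → Option (Fin n)) : Submodule k ↥(pathAlg Q k) :=
  Submodule.span k {v | ∃ s xs t, x s = some xs ∧ Q.Reach xs t ∧ v = aEl Q k t s}

/-- The two-sided ideal `J_i`: the span of all paths of `Q` except the trivial path `e_i`. -/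
def J (i : Fin n) : Submodule k ↥(pathAlg Q k) :=
  Submodule.span k {v | ∃ t s, Q.Reach s t ∧ ¬(t = i ∧ s = i) ∧ v = aEl Q k t s}

/-- The indecomposable direct summand `J_s^{(q)}` of `J_s` corresponding to the connected
component (of `Q` with `s` deleted) containing the neighbour `t` of `s`: the span of all
paths `a_{pq}` with `p, q ∈ Γ^{(t)} ∪ {s}` other than `e_s`. -/
def Jc (s t : Fin n) : Submodule k ↥(pathAlg Q k) :=
  Submodule.span k {v | ∃ p q, Q.Reach q p ∧ p ∈ Q.Gamma s t ∪ {s} ∧ q ∈ Q.Gamma s t ∪ {s} ∧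
    ¬(p = s ∧ q = s) ∧ v = aEl Q k p q}

end Algebra

section Tensor

open TensorProduct

/-- The multiplication map `I ⊗_k J → A` for two `k`-subspaces `I`, `J` of a `k`-algebra `A`. -/
noncomputable def mulMap (k A : Type) [CommRing k] [Ring A] [Algebra k A]
    (I J : Submodule k A) : (↥I ⊗[k] ↥J) →ₗ[k] A :=
  TensorProduct.lift (LinearMap.compl₁₂ (LinearMap.mul k A) I.subtype J.subtype)

/-- The submodule of `I ⊗_k J` spanned by the "balancing" relators `ba ⊗ d - b ⊗ ad`;
the quotient of `I ⊗_k J` by it is `I ⊗_A J`, so the multiplication map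
`I ⊗_A J → A` is injective if and only if the kernel of `mulMap` equals `balRel`. -/
noncomputable def balRel (k A : Type) [CommRing k] [Ring A] [Algebra k A]
    (I J : Submodule k A) : Submodule k (↥I ⊗[k] ↥J) :=
  Submodule.span k {z | ∃ (b : I) (d : J) (a : A) (h1 : (b : A) * a ∈ I) (h2 : a * (d : A) ∈ J),
    z = (⟨(b : A) * a, h1⟩ : I) ⊗ₜ[k] d - (b ⊗ₜ[k] (⟨a * (d : A), h2⟩ : J))}

end Tensor

section Aux

/-- Abstract finiteness criterion: if every element of `A` decomposes as
`z = ∑ p, ent z p • u p` and `e p.1 * z * e p.2 = ent z p • u p`, then every two-sided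
ideal is determined by the set of `u p` it contains, so there are finitely many. -/
theorem finite_twoSidedIdeal_aux (k A ι : Type) [Field k] [Ring A] [Algebra k A]
    [Finite ι] (ent : A → ι × ι → k) (u : ι × ι → A) (e : ι → A)
    (h1 : ∀ z : A, z = ∑ᶠ p : ι × ι, ent z p • u p)
    (h2 : ∀ z p, e p.1 * z * e p.2 = ent z p • u p) :
    Finite (TwoSidedIdeal A) := by
  cases nonempty_fintype ι
  have key : ∀ I J : TwoSidedIdeal A, {p | u p ∈ I} = {p | u p ∈ J} → I ≤ J := by
    intro I J hIJ z hz
    have hdec := h1 z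
    rw [finsum_eq_sum_of_fintype] at hdec
    rw [hdec]
    refine sum_mem fun p _ => ?_
    by_cases hc : ent z p = 0
    · rw [hc, zero_smul]; exact J.zero_mem
    · have hu : u p ∈ I := by
        have hm : (ent z p)⁻¹ • (e p.1 * z * e p.2) ∈ I := by
          rw [Algebra.smul_def]
          exact I.mul_mem_left _ _ (I.mul_mem_right _ _ (I.mul_mem_left _ _ hz))
        rwa [h2, smul_smul, inv_mul_cancel₀ hc, one_smul] at hm
      have huJ : u p ∈ J := by
        have : p ∈ {p | u p ∈ I} := hu
        rw [hIJ] at this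
        exact this
      rw [Algebra.smul_def]
      exact J.mul_mem_left _ _ huJ
  have inj : Function.Injective (fun I : TwoSidedIdeal A => {p | u p ∈ I}) := by
    intro I J h
    exact le_antisymm (key I J h) (key J I h.symm)
  exact Finite.of_injective _ inj

variable {n : ℕ} (Q : TreeQuiver n) (k : Type) [Field k]

theorem smul_aEl_val (z : ↥(pathAlg Q k)) (t s : Fin n) :
    (z : Matrix (Fin n) (Fin n) k) t s • ((aEl Q k t s : ↥(pathAlg Q k)) :
      Matrix (Fin n) (Fin n) k) = Matrix.single t s ((z : Matrix (Fin n) (Fin n) k) t s) := by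
  unfold aEl
  split
  · rw [Matrix.smul_single, smul_eq_mul, mul_one]
  · rename_i h
    have hz : (z : Matrix (Fin n) (Fin n) k) t s = 0 := z.2 t s h
    rw [hz]
    simp

theorem pathAlg_decomp (z : ↥(pathAlg Q k)) :
    z = ∑ᶠ p : Fin n × Fin n,
      (z : Matrix (Fin n) (Fin n) k) p.1 p.2 • aEl Q k p.1 p.2 := by
  rw [finsum_eq_sum_of_fintype]
  apply Subtype.ext
  rw [AddSubmonoidClass.coe_finset_sum]
  have : ∀ p : Fin n × Fin n,
      (((z : Matrix (Fin n) (Fin n) k) p.1 p.2 • aEl Q k p.1 p.2 : ↥(pathAlg Q k)) :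
        Matrix (Fin n) (Fin n) k)
      = Matrix.single p.1 p.2 ((z : Matrix (Fin n) (Fin n) k) p.1 p.2) := by
    intro p
    rw [← smul_aEl_val Q k z p.1 p.2]
    rfl
  rw [Finset.sum_congr rfl fun p _ => this p]
  exact (Matrix.matrix_eq_sum_single _).trans
    (Fintype.sum_prod_type'
      (f := fun i j => Matrix.single i j ((z : Matrix (Fin n) (Fin n) k) i j))).symm

theorem pathAlg_sandwich (z : ↥(pathAlg Q k)) (t s : Fin n) :
    e Q k t * z * e Q k s = (z : Matrix (Fin n) (Fin n) k) t s • aEl Q k t s := by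
  apply Subtype.ext
  have hval : ((e Q k t * z * e Q k s : ↥(pathAlg Q k)) : Matrix (Fin n) (Fin n) k)
      = Matrix.single t t 1 * (z : Matrix (Fin n) (Fin n) k) *
        Matrix.single s s 1 := rfl
  rw [hval]
  have hcoe : ((((z : Matrix (Fin n) (Fin n) k) t s) • aEl Q k t s : ↥(pathAlg Q k)) :
      Matrix (Fin n) (Fin n) k)
      = (z : Matrix (Fin n) (Fin n) k) t s •
        ((aEl Q k t s : ↥(pathAlg Q k)) : Matrix (Fin n) (Fin n) k) := rfl
  rw [hcoe, smul_aEl_val Q k z t s]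
  ext a b
  by_cases hb : b = s
  · subst hb
    rw [Matrix.mul_single_apply_same, mul_one]
    by_cases ha : a = t
    · subst ha
      rw [Matrix.single_mul_apply_same, one_mul]
      simp [Matrix.single]
    · rw [Matrix.single_mul_apply_of_ne (h := ha)]
      simp [Matrix.single, Ne.symm ha]
  · rw [Matrix.mul_single_apply_of_ne (hbj := hb)]
    simp [Matrix.single, Ne.symm hb]

end Aux

section IncAux

open scoped Classical

open scoped Classical in
/-- The analogue of `stdBasisMatrix x y 1` in the incidence algebra. -/
noncomputable def iaSingle (k P : Type) [Field k] [PartialOrder P] (x y : P) :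
    IncidenceAlgebra k P :=
  ⟨fun a b => if a = x ∧ b = y ∧ x ≤ y then 1 else 0, by
    intro a b h
    refine if_neg ?_
    rintro ⟨rfl, rfl, hxy⟩
    exact h hxy⟩

variable (k P : Type) [Field k] [PartialOrder P] [Fintype P] [DecidableEq P]
  [LocallyFiniteOrder P]

theorem iaSingle_apply (x y a b : P) :
    iaSingle k P x y a b = if a = x ∧ b = y ∧ x ≤ y then 1 else 0 := by
  rw [iaSingle]
  simp only [IncidenceAlgebra.coe_mk]
  congr 1

theorem iaSingle_diag_mul_apply (x : P) (f : IncidenceAlgebra k P) (a b : P) :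
    (iaSingle k P x x * f) a b = if a = x then f a b else 0 := by
  rw [IncidenceAlgebra.mul_apply]
  by_cases ha : a = x
  · subst ha
    rw [if_pos rfl]
    have hterm : ∀ c ∈ Finset.Icc a b, iaSingle k P a a a c * f c b
        = if c = a then f c b else 0 := by
      intro c _
      rw [iaSingle_apply]
      by_cases hc : c = a
      · subst hc; simp
      · simp [hc]
    rw [Finset.sum_congr rfl hterm]
    rw [Finset.sum_ite_eq' (Finset.Icc a b) a fun c => f c b]
    by_cases hab : a ≤ b
    · rw [if_pos (by simp [hab])]
    · rw [IncidenceAlgebra.apply_eq_zero_of_not_le hab f, if_neg (by simp [hab])]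
  · rw [if_neg ha]
    refine Finset.sum_eq_zero fun c _ => ?_
    rw [iaSingle_apply, if_neg (by tauto), zero_mul]

theorem iaSingle_mul_diag_apply (y : P) (f : IncidenceAlgebra k P) (a b : P) :
    (f * iaSingle k P y y) a b = if b = y then f a b else 0 := by
  rw [IncidenceAlgebra.mul_apply]
  by_cases hb : b = y
  · subst hb
    rw [if_pos rfl]
    have hterm : ∀ c ∈ Finset.Icc a b, f a c * iaSingle k P b b c b
        = if c = b then f a c else 0 := by
      intro c _
      rw [iaSingle_apply]
      by_cases hc : c = b
      · subst hc; simp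
      · simp [hc]
    rw [Finset.sum_congr rfl hterm]
    rw [Finset.sum_ite_eq' (Finset.Icc a b) b fun c => f a c]
    by_cases hab : a ≤ b
    · rw [if_pos (by simp [hab])]
    · rw [IncidenceAlgebra.apply_eq_zero_of_not_le hab f, if_neg (by simp [hab])]
  · rw [if_neg hb]
    refine Finset.sum_eq_zero fun c _ => ?_
    rw [iaSingle_apply, if_neg (by tauto), mul_zero]

theorem ia_sandwich (f : IncidenceAlgebra k P) (x y : P) :
    iaSingle k P x x * f * iaSingle k P y y = f x y • iaSingle k P x y := by
  ext a b _
  rw [iaSingle_mul_diag_apply, IncidenceAlgebra.constSMul_apply, iaSingle_apply, smul_eq_mul]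
  by_cases hb : b = y
  · subst hb
    rw [if_pos rfl, iaSingle_diag_mul_apply]
    by_cases ha : a = x
    · subst ha
      rw [if_pos rfl]
      by_cases hxy : a ≤ b
      · simp [hxy]
      · rw [IncidenceAlgebra.apply_eq_zero_of_not_le hxy f]
        simp
    · rw [if_neg ha, if_neg (by tauto), mul_zero]
  · rw [if_neg hb, if_neg (by tauto), mul_zero]

theorem ia_decomp (f : IncidenceAlgebra k P) :
    f = ∑ᶠ p : P × P, f p.1 p.2 • iaSingle k P p.1 p.2 := by
  rw [finsum_eq_sum_of_fintype]
  ext a b hab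
  have hsum : (∑ p : P × P, f p.1 p.2 • iaSingle k P p.1 p.2) a b
      = ∑ p : P × P, (f p.1 p.2 • iaSingle k P p.1 p.2) a b := by
    induction (Finset.univ : Finset (P × P)) using Finset.induction_on with
    | empty => simp [IncidenceAlgebra.zero_apply]
    | insert _ _ hx ih =>
        rw [Finset.sum_insert hx, Finset.sum_insert hx, IncidenceAlgebra.add_apply, ih]
  rw [hsum]
  have hterm : ∀ p ∈ (Finset.univ : Finset (P × P)),
      (f p.1 p.2 • iaSingle k P p.1 p.2) a b = if p = (a, b) then f a b else 0 := by
    intro p _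
    rw [IncidenceAlgebra.constSMul_apply, smul_eq_mul, iaSingle_apply]
    by_cases hp : p = (a, b)
    · subst hp
      simp only [true_and, if_pos rfl]
      by_cases h : a ≤ b
      · simp [h]
      · rw [IncidenceAlgebra.apply_eq_zero_of_not_le h f]
        simp
    · rw [if_neg ?_, mul_zero, if_neg hp]
      rintro ⟨h1, h2, _⟩
      exact hp (Prod.ext h1.symm h2.symm)
  rw [Finset.sum_congr rfl hterm, Finset.sum_ite_eq' Finset.univ (a, b) fun _ => f a b,
    if_pos (Finset.mem_univ _)]

end IncAux

/-- STATEMENT 18: if `A` is the path algebra over `k` of a finite quiver whose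
underlying graph is a tree, or the incidence algebra over `k` of a finite poset,
then `A` has only finitely many two-sided ideals. -/
theorem statement18 (k : Type) [Field k] [IsAlgClosed k] :
    (∀ {n : ℕ} (Q : TreeQuiver n), Finite (TwoSidedIdeal ↥(pathAlg Q k))) ∧
    (∀ (P : Type) [PartialOrder P] [Fintype P] [DecidableEq P] [LocallyFiniteOrder P],
      Finite (TwoSidedIdeal (IncidenceAlgebra k P))) := by
  constructor
  · intro n Q
    exact finite_twoSidedIdeal_aux k (↥(pathAlg Q k)) (Fin n)
      (fun z p => (z : Matrix (Fin n) (Fin n) k) p.1 p.2)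
      (fun p => aEl Q k p.1 p.2) (e Q k)
      (pathAlg_decomp Q k) (fun z p => pathAlg_sandwich Q k z p.1 p.2)
  · intro P _ _ _ _
    exact finite_twoSidedIdeal_aux k (IncidenceAlgebra k P) P
      (fun f p => f p.1 p.2) (fun p => iaSingle k P p.1 p.2)
      (fun x => iaSingle k P x x)
      (ia_decomp k P) (fun f p => ia_sandwich k P f p.1 p.2)

end DPF
end
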